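/- arXiv:1403.7164 — 8 statements merged into one kernel-verified Lean document; each statement's English description precedes it below -/
import Mathlib

section
/- For any two probability distributions P and Q on a finite set, the Chernoff information C(P,Q) = -min_{λ∈[0,1]} log(Σₓ P(x)^λ Q(x)^{1-λ}) satisfies C(P,Q) ≥ -(1/2) log(1 - d_TV(P,Q)²), provided d_TV(P,Q) < 1. -/
theorem chernoff_information_lower_bound {α : Type*} [Fintype α] (P Q : α → ℝ)
    (hP : ∀ x, 0 ≤ P x) (hQ : ∀ x, 0 ≤ Q x)
    (hPsum : ∑ x, P x = 1) (hQsum : ∑ x, Q x = 1)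
    (ε : ℝ) (hε : ε = (1 / 2) * ∑ x, |P x - Q x|) (hε1 : ε < 1) :
    -sInf ((fun l : ℝ => Real.log (∑ x, P x ^ l * Q x ^ (1 - l))) '' Set.Icc 0 1)
      ≥ -(1 / 2) * Real.log (1 - ε ^ 2) := by
  have hε0 : 0 ≤ ε := by
    rw [hε]
    have : 0 ≤ ∑ x, |P x - Q x| := Finset.sum_nonneg fun x _ => abs_nonneg _
    linarith
  have h1ε : 0 < 1 - ε ^ 2 := by nlinarith
  set S : ℝ := ∑ x, Real.sqrt (P x) * Real.sqrt (Q x) with hSdef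
  have hS0 : 0 ≤ S := Finset.sum_nonneg fun x _ =>
    mul_nonneg (Real.sqrt_nonneg _) (Real.sqrt_nonneg _)
  -- Cauchy–Schwarz
  have hCS := Finset.sum_mul_sq_le_sq_mul_sq Finset.univ
    (fun x => |Real.sqrt (P x) - Real.sqrt (Q x)|)
    (fun x => Real.sqrt (P x) + Real.sqrt (Q x))
  have hptw : ∀ x : α, |Real.sqrt (P x) - Real.sqrt (Q x)| *
      (Real.sqrt (P x) + Real.sqrt (Q x)) = |P x - Q x| := by
    intro x
    have h1 : (0:ℝ) ≤ Real.sqrt (P x) + Real.sqrt (Q x) :=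
      add_nonneg (Real.sqrt_nonneg _) (Real.sqrt_nonneg _)
    rw [← abs_of_nonneg h1, ← abs_mul]
    congr 1
    have hp := Real.sq_sqrt (hP x)
    have hq := Real.sq_sqrt (hQ x)
    nlinarith [hp, hq]
  have hsq1 : ∑ x, |Real.sqrt (P x) - Real.sqrt (Q x)| ^ 2 = 2 - 2 * S := by
    have : ∀ x : α, |Real.sqrt (P x) - Real.sqrt (Q x)| ^ 2
        = P x + Q x - 2 * (Real.sqrt (P x) * Real.sqrt (Q x)) := by
      intro x
      rw [sq_abs, sub_sq, Real.sq_sqrt (hP x), Real.sq_sqrt (hQ x)]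
      ring
    rw [Finset.sum_congr rfl fun x _ => this x]
    rw [Finset.sum_sub_distrib, Finset.sum_add_distrib, hPsum, hQsum, ← Finset.mul_sum]
    ring
  have hsq2 : ∑ x, (Real.sqrt (P x) + Real.sqrt (Q x)) ^ 2 = 2 + 2 * S := by
    have : ∀ x : α, (Real.sqrt (P x) + Real.sqrt (Q x)) ^ 2
        = P x + Q x + 2 * (Real.sqrt (P x) * Real.sqrt (Q x)) := by
      intro x
      rw [add_sq, Real.sq_sqrt (hP x), Real.sq_sqrt (hQ x)]
      ring
    rw [Finset.sum_congr rfl fun x _ => this x]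
    rw [Finset.sum_add_distrib, Finset.sum_add_distrib, hPsum, hQsum, ← Finset.mul_sum]
    ring
  have hsum_abs : ∑ x, |P x - Q x| = 2 * ε := by rw [hε]; ring
  have hS2 : S ^ 2 ≤ 1 - ε ^ 2 := by
    rw [Finset.sum_congr rfl fun x _ => hptw x, hsum_abs, hsq1, hsq2] at hCS
    nlinarith [hCS]
  -- S > 0
  have hSpos : 0 < S := by
    by_contra h
    push_neg at h
    have hS_eq : S = 0 := le_antisymm h hS0
    have hzero : ∀ x ∈ Finset.univ (α := α), Real.sqrt (P x) * Real.sqrt (Q x) = 0 := by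
      intro x _
      have := (Finset.sum_eq_zero_iff_of_nonneg fun x _ =>
        mul_nonneg (Real.sqrt_nonneg _) (Real.sqrt_nonneg _)).mp hS_eq
      exact this x (Finset.mem_univ x)
    have habs : ∀ x : α, |P x - Q x| = P x + Q x := by
      intro x
      have h0 := hzero x (Finset.mem_univ x)
      rcases mul_eq_zero.mp h0 with h' | h'
      · have hP0 : P x = 0 := by
          have := Real.sqrt_eq_zero (hP x) |>.mp h'
          exact this
        rw [hP0]
        simp [abs_of_nonpos (by linarith [hQ x] : (0:ℝ) - Q x ≤ 0), hQ x]
      · have hQ0 : Q x = 0 := by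
          have := Real.sqrt_eq_zero (hQ x) |>.mp h'
          exact this
        rw [hQ0]
        simp [abs_of_nonneg (hP x)]
    have : ∑ x, |P x - Q x| = 2 := by
      rw [Finset.sum_congr rfl fun x _ => habs x, Finset.sum_add_distrib, hPsum, hQsum]
      norm_num
    rw [this] at hsum_abs
    linarith
  -- there is a point with positive product
  obtain ⟨x₀, hx₀⟩ : ∃ x : α, 0 < P x * Q x := by
    by_contra h
    push_neg at h
    have : S = 0 := by
      apply Finset.sum_eq_zero
      intro x _
      rw [← Real.sqrt_mul (hP x)]
      have : P x * Q x = 0 := le_antisymm (h x) (mul_nonneg (hP x) (hQ x))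
      rw [this, Real.sqrt_zero]
    linarith
  have hPx₀ : 0 < P x₀ := by
    rcases lt_or_ge 0 (P x₀) with h | h
    · exact h
    · exfalso; nlinarith [hQ x₀, hP x₀]
  have hQx₀ : 0 < Q x₀ := by
    rcases lt_or_ge 0 (Q x₀) with h | h
    · exact h
    · exfalso; nlinarith [hP x₀, hQ x₀]
  set c : ℝ := min (P x₀) 1 * min (Q x₀) 1 with hcdef
  have hc : 0 < c := mul_pos (lt_min hPx₀ one_pos) (lt_min hQx₀ one_pos)
  -- lower bound on each rpow term
  have hlb : ∀ l ∈ Set.Icc (0:ℝ) 1, c ≤ ∑ x, P x ^ l * Q x ^ (1 - l) := by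
    intro l hl
    obtain ⟨hl0, hl1⟩ := hl
    have hterm : ∀ (a : ℝ) (ha : 0 < a) (t : ℝ) (ht0 : 0 ≤ t) (ht1 : t ≤ 1),
        min a 1 ≤ a ^ t := by
      intro a ha t ht0 ht1
      rcases le_total a 1 with h | h
      · rw [min_eq_left h]
        calc a = a ^ (1:ℝ) := (Real.rpow_one a).symm
        _ ≤ a ^ t := Real.rpow_le_rpow_of_exponent_ge ha h ht1
      · rw [min_eq_right h]
        calc (1:ℝ) = a ^ (0:ℝ) := (Real.rpow_zero a).symm
        _ ≤ a ^ t := Real.rpow_le_rpow_of_exponent_le h ht0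
    calc c ≤ P x₀ ^ l * Q x₀ ^ (1 - l) := by
          apply mul_le_mul (hterm _ hPx₀ l hl0 hl1) (hterm _ hQx₀ (1 - l) (by linarith) (by linarith))
            (le_of_lt (lt_min hQx₀ one_pos)) (Real.rpow_nonneg (hP x₀) l)
      _ ≤ ∑ x, P x ^ l * Q x ^ (1 - l) := by
          apply Finset.single_le_sum (f := fun x => P x ^ l * Q x ^ (1 - l))
            (fun x _ => mul_nonneg (Real.rpow_nonneg (hP x) _) (Real.rpow_nonneg (hQ x) _))
            (Finset.mem_univ x₀)
  have hBdd : BddBelow ((fun l : ℝ => Real.log (∑ x, P x ^ l * Q x ^ (1 - l))) '' Set.Icc 0 1) := by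
    refine ⟨Real.log c, ?_⟩
    rintro y ⟨l, hl, rfl⟩
    exact Real.log_le_log hc (hlb l hl)
  -- value at 1/2
  have hval : (fun l : ℝ => Real.log (∑ x, P x ^ l * Q x ^ (1 - l))) (1/2) = Real.log S := by
    simp only
    congr 1
    rw [hSdef]
    apply Finset.sum_congr rfl
    intro x _
    rw [show (1:ℝ) - 1/2 = 1/2 by norm_num]
    rw [Real.sqrt_eq_rpow, Real.sqrt_eq_rpow]
  have hmem : Real.log S ∈ (fun l : ℝ => Real.log (∑ x, P x ^ l * Q x ^ (1 - l))) '' Set.Icc 0 1 := by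
    refine ⟨1/2, ⟨by norm_num, by norm_num⟩, hval⟩
  have hinf_le : sInf ((fun l : ℝ => Real.log (∑ x, P x ^ l * Q x ^ (1 - l))) '' Set.Icc 0 1)
      ≤ Real.log S := csInf_le hBdd hmem
  have hlogS : Real.log S ≤ (1/2) * Real.log (1 - ε ^ 2) := by
    have hSle : S ≤ Real.sqrt (1 - ε ^ 2) := by
      rw [show S = Real.sqrt (S^2) by rw [Real.sqrt_sq hS0]]
      exact Real.sqrt_le_sqrt hS2
    calc Real.log S ≤ Real.log (Real.sqrt (1 - ε ^ 2)) := Real.log_le_log hSpos hSle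
      _ = (1/2) * Real.log (1 - ε ^ 2) := by
          rw [Real.log_sqrt (le_of_lt h1ε)]; ring
  linarith
end

section
/- For any two probability distributions P and Q on a finite set, the capacitory discrimination C̄(P,Q) = D(P‖(P+Q)/2) + D(Q‖(P+Q)/2) satisfies C̄(P,Q) ≥ 2·d((1-ε)/2 ‖ 1/2), where ε = d_TV(P,Q) and d(p‖q) = p·log(p/q) + (1-p)·log((1-p)/(1-q)) is the binary relative entropy. -/
noncomputable def gfun (t : ℝ) : ℝ :=
  ((1 + t) * Real.log (1 + t) + (1 - t) * Real.log (1 - t)) / 2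

lemma gfun_convex : ConvexOn ℝ (Set.Icc (0 : ℝ) 1) gfun := by
  have h1 : ConvexOn ℝ (Set.Icc (0 : ℝ) 1) (fun t => (1 + t) * Real.log (1 + t)) := by
    have h := (Real.convexOn_mul_log).comp_affineMap (AffineMap.lineMap (1 : ℝ) 2)
    have he : ((fun x => x * Real.log x) ∘ ⇑(AffineMap.lineMap (1 : ℝ) 2))
        = fun t => (1 + t) * Real.log (1 + t) := by
      funext t
      simp [AffineMap.lineMap_apply_ring]
      ring_nf
    rw [he] at h
    refine h.subset ?_ (convex_Icc 0 1)
    intro t ht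
    simp only [Set.mem_preimage, AffineMap.lineMap_apply_ring, Set.mem_Ici]
    nlinarith [ht.1, ht.2]
  have h2 : ConvexOn ℝ (Set.Icc (0 : ℝ) 1) (fun t => (1 - t) * Real.log (1 - t)) := by
    have h := (Real.convexOn_mul_log).comp_affineMap (AffineMap.lineMap (1 : ℝ) 0)
    have he : ((fun x => x * Real.log x) ∘ ⇑(AffineMap.lineMap (1 : ℝ) 0))
        = fun t => (1 - t) * Real.log (1 - t) := by
      funext t
      simp [AffineMap.lineMap_apply_ring]
    rw [he] at h
    refine h.subset ?_ (convex_Icc 0 1)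
    intro t ht
    simp only [Set.mem_preimage, AffineMap.lineMap_apply_ring, Set.mem_Ici]
    nlinarith [ht.1, ht.2]
  have h3 := (h1.add h2).smul (c := (1/2 : ℝ)) (by norm_num)
  convert h3 using 1
  case e'_4 => rfl
  case e'_10 => rfl
  funext t
  simp [gfun]
  ring

lemma pointwise_gfun (a b : ℝ) (ha : 0 ≤ a) (hb : 0 ≤ b) :
    a * Real.log (a / ((a + b) / 2)) + b * Real.log (b / ((a + b) / 2))
    = (a + b) * gfun (|a - b| / (a + b)) := by
  rcases eq_or_lt_of_le (by linarith : (0:ℝ) ≤ a + b) with h | h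
  · have ha0 : a = 0 := by linarith
    have hb0 : b = 0 := by linarith
    simp [ha0, hb0]
  · have hs : a + b ≠ 0 := ne_of_gt h
    have geven : gfun (|a - b| / (a + b)) = gfun ((a - b) / (a + b)) := by
      rcases abs_cases (a - b) with ⟨he, _⟩ | ⟨he, _⟩
      · rw [he]
      · rw [he]
        unfold gfun
        rw [neg_div, show (1:ℝ) + -((a - b) / (a + b)) = 1 - (a - b) / (a + b) by ring,
          show (1:ℝ) - -((a - b) / (a + b)) = 1 + (a - b) / (a + b) by ring]
        ring
    rw [geven]
    have h1 : a / ((a + b) / 2) = 1 + (a - b) / (a + b) := by field_simp; ring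
    have h2 : b / ((a + b) / 2) = 1 - (a - b) / (a + b) := by field_simp; ring
    rw [h1, h2]
    unfold gfun
    field_simp
    ring

theorem capacitory_discrimination_lower_bound {α : Type*} [Fintype α] (P Q : α → ℝ)
    (hP : ∀ x, 0 ≤ P x) (hQ : ∀ x, 0 ≤ Q x)
    (hPsum : ∑ x, P x = 1) (hQsum : ∑ x, Q x = 1)
    (ε : ℝ) (hε : ε = (1 / 2) * ∑ x, |P x - Q x|) :
    (∑ x, P x * Real.log (P x / ((P x + Q x) / 2))) +
      (∑ x, Q x * Real.log (Q x / ((P x + Q x) / 2)))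
    ≥ 2 * (((1 - ε) / 2) * Real.log (((1 - ε) / 2) / (1 / 2)) +
          (1 - (1 - ε) / 2) * Real.log ((1 - (1 - ε) / 2) / (1 - 1 / 2))) := by
  set w : α → ℝ := fun x => (P x + Q x) / 2 with hw
  set u : α → ℝ := fun x => |P x - Q x| / (P x + Q x) with hu
  have hw0 : ∀ x ∈ Finset.univ (α := α), 0 ≤ w x := fun x _ => by
    have := hP x; have := hQ x; simp only [hw]; positivity
  have hw1 : ∑ x, w x = 1 := by
    simp only [hw]
    rw [← Finset.sum_div, Finset.sum_add_distrib, hPsum, hQsum]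
    norm_num
  have humem : ∀ x ∈ Finset.univ (α := α), u x ∈ Set.Icc (0:ℝ) 1 := by
    intro x _
    constructor
    · apply div_nonneg (abs_nonneg _)
      linarith [hP x, hQ x]
    · rcases eq_or_lt_of_le (by linarith [hP x, hQ x] : (0:ℝ) ≤ P x + Q x) with h | h
      · simp [hu, ← h]
      · rw [hu, div_le_one h]
        rw [abs_le]
        constructor <;> [linarith [hP x]; linarith [hQ x]]
  have hwu : ∑ x, w x • u x = ε := by
    rw [hε, Finset.mul_sum]
    apply Finset.sum_congr rfl
    intro x _
    rcases eq_or_lt_of_le (by linarith [hP x, hQ x] : (0:ℝ) ≤ P x + Q x) with h | h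
    · have h1 : P x = 0 := by linarith [hP x, hQ x]
      have h2 : Q x = 0 := by linarith [hP x, hQ x]
      simp [hw, hu, h1, h2]
    · simp only [hw, hu, smul_eq_mul]
      field_simp
  have hjensen := gfun_convex.map_sum_le hw0 hw1 humem
  rw [hwu] at hjensen
  have hLHS : (∑ x, P x * Real.log (P x / ((P x + Q x) / 2))) +
      (∑ x, Q x * Real.log (Q x / ((P x + Q x) / 2)))
      = 2 * ∑ x, w x • gfun (u x) := by
    rw [← Finset.sum_add_distrib, Finset.mul_sum]
    apply Finset.sum_congr rfl
    intro x _
    rw [pointwise_gfun (P x) (Q x) (hP x) (hQ x)]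
    simp only [hw, hu, smul_eq_mul]
    ring
  have hRHS : 2 * (((1 - ε) / 2) * Real.log (((1 - ε) / 2) / (1 / 2)) +
          (1 - (1 - ε) / 2) * Real.log ((1 - (1 - ε) / 2) / (1 - 1 / 2)))
      = 2 * gfun ε := by
    rw [show ((1 - ε) / 2) / (1 / 2 : ℝ) = 1 - ε by ring,
      show (1 - (1 - ε) / 2 : ℝ) = (1 + ε) / 2 by ring,
      show ((1 + ε) / 2) / (1 - 1 / 2 : ℝ) = 1 + ε by ring]
    unfold gfun
    ring
  rw [hLHS, hRHS]
  linarith [hjensen]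
end

section
/- For ε ∈ [0,1], the 2-element distributions P = ((1-ε)/2, (1+ε)/2) and Q = ((1+ε)/2, (1-ε)/2) satisfy C̄(P,Q) = 2·d((1-ε)/2 ‖ 1/2) = (1+ε)log(1+ε) + (1-ε)log(1-ε), so the lower bound on the capacitory discrimination in terms of total variation distance is attained. -/
theorem capacitory_discrimination_attained (ε : ℝ) (hε : ε ∈ Set.Icc (0 : ℝ) 1) :
    let P : Fin 2 → ℝ := ![(1 - ε) / 2, (1 + ε) / 2]
    let Q : Fin 2 → ℝ := ![(1 + ε) / 2, (1 - ε) / 2]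
    (∑ x, P x * Real.log (P x / ((P x + Q x) / 2))) +
      (∑ x, Q x * Real.log (Q x / ((P x + Q x) / 2)))
    = 2 * (((1 - ε) / 2) * Real.log (((1 - ε) / 2) / (1 / 2)) +
          (1 - (1 - ε) / 2) * Real.log ((1 - (1 - ε) / 2) / (1 - 1 / 2))) ∧
    (∑ x, P x * Real.log (P x / ((P x + Q x) / 2))) +
      (∑ x, Q x * Real.log (Q x / ((P x + Q x) / 2)))
    = (1 + ε) * Real.log (1 + ε) + (1 - ε) * Real.log (1 - ε) := by
  intro P Q
  have h1 : ((1 - ε) / 2) / ((((1 - ε) / 2) + ((1 + ε) / 2)) / 2) = 1 - ε := by ring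
  have h2 : ((1 + ε) / 2) / ((((1 + ε) / 2) + ((1 - ε) / 2)) / 2) = 1 + ε := by ring
  have h3 : ((1 - ε) / 2) / (1 / 2 : ℝ) = 1 - ε := by ring
  have h4 : (1 - (1 - ε) / 2) / (1 - 1 / 2 : ℝ) = 1 + ε := by ring
  simp only [P, Q, Fin.sum_univ_two, Matrix.cons_val_zero, Matrix.cons_val_one, Matrix.head_cons,
    h1, h2, h3, h4]
  constructor <;> ring
end

section
/- For any two probability distributions P and Q on a finite set, the concavity deficit of the entropy satisfies H((P+Q)/2) - (H(P)+H(Q))/2 ≥ d((1 - d_TV(P,Q))/2 ‖ 1/2), where H(P) = -Σₓ P(x) log P(x) and d(p‖q) is the binary relative entropy. -/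
open Real Set Finset

noncomputable def phi (s : ℝ) : ℝ :=
  (1 + s) / 2 * Real.log (1 + s) + (1 - s) / 2 * Real.log (1 - s)

lemma phi_convex : ConvexOn ℝ (Set.Icc (0:ℝ) 1) phi := by
  have h1 : ConvexOn ℝ (Set.Icc (0:ℝ) 1)
      (fun s : ℝ => (1 + s) * Real.log (1 + s)) := by
    have hsub : Set.Icc (0:ℝ) 1 ⊆
        (⇑(AffineMap.const ℝ ℝ (1:ℝ) + AffineMap.id ℝ ℝ)) ⁻¹' Set.Ici 0 := by
      intro x hx
      simp only [Set.mem_preimage, AffineMap.coe_add, AffineMap.coe_const,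
        AffineMap.coe_id, Pi.add_apply, Function.const_apply, id_eq, Set.mem_Ici]
      linarith [hx.1]
    have h := ((Real.convexOn_mul_log).comp_affineMap
      (AffineMap.const ℝ ℝ (1:ℝ) + AffineMap.id ℝ ℝ)).subset hsub (convex_Icc 0 1)
    simpa [Function.comp_def, Pi.add_apply, Pi.sub_apply, Pi.one_apply, id_eq] using h
  have h2 : ConvexOn ℝ (Set.Icc (0:ℝ) 1)
      (fun s : ℝ => (1 - s) * Real.log (1 - s)) := by
    have hsub : Set.Icc (0:ℝ) 1 ⊆
        (⇑(AffineMap.const ℝ ℝ (1:ℝ) - AffineMap.id ℝ ℝ)) ⁻¹' Set.Ici 0 := by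
      intro x hx
      simp only [Set.mem_preimage, AffineMap.coe_sub, AffineMap.coe_const,
        AffineMap.coe_id, Pi.sub_apply, Function.const_apply, id_eq, Set.mem_Ici]
      linarith [hx.2]
    have h := ((Real.convexOn_mul_log).comp_affineMap
      (AffineMap.const ℝ ℝ (1:ℝ) - AffineMap.id ℝ ℝ)).subset hsub (convex_Icc 0 1)
    simpa [Function.comp_def, Pi.add_apply, Pi.sub_apply, Pi.one_apply, id_eq] using h
  have := (h1.add h2).smul (by norm_num : (0:ℝ) ≤ 1/2)
  convert this using 1
  · rfl
  · rfl
  funext s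
  simp only [Pi.smul_apply, Pi.add_apply, smul_eq_mul, phi]
  ring

lemma phi_neg (t : ℝ) : phi (-t) = phi t := by
  simp [phi]; ring

lemma phi_one : phi 1 = Real.log 2 := by
  norm_num [phi]

lemma pointwise (p q : ℝ) (hp : 0 ≤ p) (hq : 0 ≤ q) :
    ((p + q) / 2) * phi (if p + q = 0 then 0 else |p - q| / (p + q)) =
      (p * Real.log p + q * Real.log q) / 2
        - ((p + q) / 2) * Real.log ((p + q) / 2) := by
  rcases eq_or_lt_of_le (by linarith : (0:ℝ) ≤ p + q) with h | h
  · have hp0 : p = 0 := by linarith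
    have hq0 : q = 0 := by linarith
    simp [hp0, hq0]
  · have hne : p + q ≠ 0 := ne_of_gt h
    rw [if_neg hne]
    rcases hp.eq_or_lt with hp0 | hp0
    · have hq0 : 0 < q := by linarith
      rw [← hp0]
      rw [show |0 - q| = q by rw [abs_of_nonpos (by linarith)]; ring]
      rw [show (0:ℝ) + q = q by ring, div_self (ne_of_gt hq0), phi_one,
        Real.log_div (ne_of_gt hq0) (by norm_num : (2:ℝ) ≠ 0)]
      ring_nf
    · rcases hq.eq_or_lt with hq0 | hq0
      · rw [← hq0]
        rw [show |p - 0| = p by rw [abs_of_nonneg (by linarith)]; ring]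
        rw [show p + (0:ℝ) = p by ring, div_self (ne_of_gt hp0), phi_one,
          Real.log_div (ne_of_gt hp0) (by norm_num : (2:ℝ) ≠ 0)]
        ring_nf
      · have key : ((p + q) / 2) * phi ((p - q) / (p + q)) =
            (p * Real.log p + q * Real.log q) / 2
              - ((p + q) / 2) * Real.log ((p + q) / 2) := by
          have e1 : 1 + (p - q) / (p + q) = 2 * p / (p + q) := by field_simp; ring
          have e2 : 1 - (p - q) / (p + q) = 2 * q / (p + q) := by field_simp; ring
          rw [phi, e1, e2]
          have l1 : Real.log (2 * p / (p + q)) = Real.log p - Real.log ((p+q)/2) := by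
            rw [Real.log_div (by positivity) hne, Real.log_mul (by norm_num) (ne_of_gt hp0),
              Real.log_div (ne_of_gt h) (by norm_num)]
            ring
          have l2 : Real.log (2 * q / (p + q)) = Real.log q - Real.log ((p+q)/2) := by
            rw [Real.log_div (by positivity) hne, Real.log_mul (by norm_num) (ne_of_gt hq0),
              Real.log_div (ne_of_gt h) (by norm_num)]
            ring
          rw [l1, l2]
          field_simp
          ring
        rcases abs_cases (p - q) with ⟨ha, _⟩ | ⟨ha, _⟩
        · rw [ha]; exact key
        · rw [ha, neg_div, phi_neg]; exact key

theorem entropy_concavity_deficit_lower_bound {α : Type*} [Fintype α] (P Q : α → ℝ)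
    (hP : ∀ x, 0 ≤ P x) (hQ : ∀ x, 0 ≤ Q x)
    (hPsum : ∑ x, P x = 1) (hQsum : ∑ x, Q x = 1)
    (ε : ℝ) (hε : ε = (1 / 2) * ∑ x, |P x - Q x|) :
    (-∑ x, ((P x + Q x) / 2) * Real.log ((P x + Q x) / 2)) -
      ((-∑ x, P x * Real.log (P x)) + (-∑ x, Q x * Real.log (Q x))) / 2
    ≥ ((1 - ε) / 2) * Real.log (((1 - ε) / 2) / (1 / 2)) +
        (1 - (1 - ε) / 2) * Real.log ((1 - (1 - ε) / 2) / (1 - 1 / 2)) := by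
  set m : α → ℝ := fun x => (P x + Q x) / 2 with hm
  set s : α → ℝ := fun x =>
    if P x + Q x = 0 then 0 else |P x - Q x| / (P x + Q x) with hs
  have hmsum : ∑ x, m x = 1 := by
    simp only [hm]
    rw [← Finset.sum_div, Finset.sum_add_distrib, hPsum, hQsum]
    norm_num
  have h₀ : ∀ x ∈ Finset.univ (α := α), 0 ≤ m x := by
    intro x _; have := hP x; have := hQ x; simp only [hm]; positivity
  have hmem : ∀ x ∈ Finset.univ (α := α), s x ∈ Set.Icc (0:ℝ) 1 := by
    intro x _
    simp only [hs]
    split_ifs with h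
    · exact ⟨le_refl 0, by norm_num⟩
    · have hpos : 0 < P x + Q x :=
        lt_of_le_of_ne (by linarith [hP x, hQ x]) (Ne.symm h)
      constructor
      · positivity
      · rw [div_le_one hpos]
        rw [abs_le]
        constructor <;> linarith [hP x, hQ x]
  have hms : ∀ x, m x * s x = |P x - Q x| / 2 := by
    intro x
    simp only [hm, hs]
    split_ifs with h
    · have hp0 : P x = 0 := by linarith [hP x, hQ x]
      have hq0 : Q x = 0 := by linarith [hP x, hQ x]
      simp [hp0, hq0]
    · field_simp
  have hsum_ms : ∑ x, m x • s x = ε := by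
    simp only [smul_eq_mul]
    rw [hε, Finset.mul_sum]
    exact Finset.sum_congr rfl fun x _ => by rw [hms x]; ring
  have jensen := phi_convex.map_sum_le h₀ hmsum hmem
  rw [hsum_ms] at jensen
  have hLHS : ∑ x, m x • phi (s x) =
      (-∑ x, ((P x + Q x) / 2) * Real.log ((P x + Q x) / 2)) -
        ((-∑ x, P x * Real.log (P x)) + (-∑ x, Q x * Real.log (Q x))) / 2 := by
    simp only [smul_eq_mul]
    have : ∀ x ∈ Finset.univ (α := α), m x * phi (s x) =
        (P x * Real.log (P x) + Q x * Real.log (Q x)) / 2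
          - m x * Real.log (m x) := fun x _ => pointwise (P x) (Q x) (hP x) (hQ x)
    rw [Finset.sum_congr rfl this, Finset.sum_sub_distrib, ← Finset.sum_div,
      Finset.sum_add_distrib]
    ring
  have hRHS : ((1 - ε) / 2) * Real.log (((1 - ε) / 2) / (1 / 2)) +
      (1 - (1 - ε) / 2) * Real.log ((1 - (1 - ε) / 2) / (1 - 1 / 2)) = phi ε := by
    have e1 : ((1 - ε) / 2) / (1 / 2) = 1 - ε := by ring
    have e2 : (1 - (1 - ε) / 2) = (1 + ε) / 2 := by ring
    have e3 : ((1 + ε) / 2) / (1 - 1 / 2) = 1 + ε := by ring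
    rw [e1, e2, e3, phi]
    ring
  rw [hRHS, ge_iff_le]
  calc phi ε ≤ ∑ x, m x • phi (s x) := jensen
    _ = _ := hLHS
end

section
/- For any two probability distributions P and Q on a finite set with d_TV(P,Q) = ε < 1 and P, Q mutually absolutely continuous (so the Jeffreys divergence is finite), J(P,Q) = (D(P‖Q) + D(Q‖P))/2 ≥ ε·log((1+ε)/(1-ε)). -/
open Real Finset

private lemma phi_convex_s12 : ConvexOn ℝ (Set.Ico (0:ℝ) 1)
    (fun t => t * Real.log ((1+t)/(1-t))) := by
  have A1 : ℝ →ᵃ[ℝ] ℝ := (LinearMap.id : ℝ →ₗ[ℝ] ℝ).toAffineMap + AffineMap.const ℝ ℝ 1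
  have c1 : ConvexOn ℝ (Set.Ico (0:ℝ) 1) (fun t : ℝ => (1+t) * Real.log (1+t)) := by
    have h := Real.convexOn_mul_log.comp_affineMap
      ((LinearMap.id : ℝ →ₗ[ℝ] ℝ).toAffineMap + AffineMap.const ℝ ℝ 1)
    refine (h.subset ?_ (convex_Ico 0 1)).congr ?_
    · intro x hx
      simp only [Set.mem_preimage, AffineMap.coe_add, AffineMap.coe_const,
        LinearMap.coe_toAffineMap, LinearMap.id_coe, id_eq, Function.const_apply, Pi.add_apply, Set.mem_Ici]
      linarith [hx.1]
    · intro x hx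
      simp only [Function.comp_apply, AffineMap.coe_add, AffineMap.coe_const,
        LinearMap.coe_toAffineMap, LinearMap.id_coe, id_eq, Function.const_apply, Pi.add_apply]
      ring_nf
  have c2 : ConvexOn ℝ (Set.Ico (0:ℝ) 1) (fun t : ℝ => (1-t) * Real.log (1-t)) := by
    have h := Real.convexOn_mul_log.comp_affineMap
      ((-(LinearMap.id : ℝ →ₗ[ℝ] ℝ)).toAffineMap + AffineMap.const ℝ ℝ 1)
    refine (h.subset ?_ (convex_Ico 0 1)).congr ?_
    · intro x hx
      simp only [Set.mem_preimage, AffineMap.coe_add, AffineMap.coe_const,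
        LinearMap.coe_toAffineMap, LinearMap.neg_apply, LinearMap.id_coe, id_eq, Function.const_apply,
        Pi.add_apply, Set.mem_Ici]
      linarith [hx.2]
    · intro x hx
      simp only [Function.comp_apply, AffineMap.coe_add, AffineMap.coe_const,
        LinearMap.coe_toAffineMap, LinearMap.neg_apply, LinearMap.id_coe, id_eq, Function.const_apply,
        Pi.add_apply]
      ring_nf
  have cneglog : ConvexOn ℝ (Set.Ioi (0:ℝ)) (fun x : ℝ => -Real.log x) :=
    strictConcaveOn_log_Ioi.concaveOn.neg
  have c3 : ConvexOn ℝ (Set.Ico (0:ℝ) 1) (fun t : ℝ => -Real.log (1+t)) := by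
    have h := cneglog.comp_affineMap
      ((LinearMap.id : ℝ →ₗ[ℝ] ℝ).toAffineMap + AffineMap.const ℝ ℝ 1)
    refine (h.subset ?_ (convex_Ico 0 1)).congr ?_
    · intro x hx
      simp only [Set.mem_preimage, AffineMap.coe_add, AffineMap.coe_const,
        LinearMap.coe_toAffineMap, LinearMap.id_coe, id_eq, Function.const_apply, Pi.add_apply, Set.mem_Ioi]
      linarith [hx.1]
    · intro x hx
      simp only [Function.comp_apply, AffineMap.coe_add, AffineMap.coe_const,
        LinearMap.coe_toAffineMap, LinearMap.id_coe, id_eq, Function.const_apply, Pi.add_apply]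
      ring_nf
  have c4 : ConvexOn ℝ (Set.Ico (0:ℝ) 1) (fun t : ℝ => -Real.log (1-t)) := by
    have h := cneglog.comp_affineMap
      ((-(LinearMap.id : ℝ →ₗ[ℝ] ℝ)).toAffineMap + AffineMap.const ℝ ℝ 1)
    refine (h.subset ?_ (convex_Ico 0 1)).congr ?_
    · intro x hx
      simp only [Set.mem_preimage, AffineMap.coe_add, AffineMap.coe_const,
        LinearMap.coe_toAffineMap, LinearMap.neg_apply, LinearMap.id_coe, id_eq, Function.const_apply,
        Pi.add_apply, Set.mem_Ioi]
      linarith [hx.2]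
    · intro x hx
      simp only [Function.comp_apply, AffineMap.coe_add, AffineMap.coe_const,
        LinearMap.coe_toAffineMap, LinearMap.neg_apply, LinearMap.id_coe, id_eq, Function.const_apply,
        Pi.add_apply]
      ring_nf
  refine (((c1.add c2).add c3).add c4).congr ?_
  intro x hx
  have h1 : (0:ℝ) < 1 + x := by linarith [hx.1]
  have h2 : (0:ℝ) < 1 - x := by linarith [hx.2]
  simp only [Pi.add_apply]
  rw [Real.log_div h1.ne' h2.ne']
  ring

private lemma pointwise_id (p q : ℝ) (hp : 0 < p) (hq : 0 < q) :
    p * Real.log (p/q) + q * Real.log (q/p)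
      = (p+q) * ((|p-q|/(p+q)) *
        Real.log ((1 + |p-q|/(p+q))/(1 - |p-q|/(p+q)))) := by
  have hs : (0:ℝ) < p + q := by linarith
  rcases le_total q p with h | h
  · rw [abs_of_nonneg (by linarith : (0:ℝ) ≤ p - q)]
    have hn : 1 + (p-q)/(p+q) = 2*p/(p+q) := by field_simp; ring
    have hd : 1 - (p-q)/(p+q) = 2*q/(p+q) := by field_simp; ring
    have hr : (1 + (p-q)/(p+q)) / (1 - (p-q)/(p+q)) = p/q := by
      rw [hn, hd]
      have h1 := hs.ne'
      have h2 := hq.ne'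
      have h3 := hp.ne'
      rw [div_div_div_eq]
      rw [div_eq_div_iff (by positivity) (by positivity)]
      ring
    rw [hr, Real.log_div hp.ne' hq.ne', Real.log_div hq.ne' hp.ne']
    field_simp
    ring
  · rw [abs_of_nonpos (by linarith : p - q ≤ (0:ℝ))]
    have hn : 1 + -(p-q)/(p+q) = 2*q/(p+q) := by field_simp; ring
    have hd : 1 - -(p-q)/(p+q) = 2*p/(p+q) := by field_simp; ring
    have hr : (1 + -(p-q)/(p+q)) / (1 - -(p-q)/(p+q)) = q/p := by
      rw [hn, hd]
      have h1 := hs.ne'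
      have h2 := hq.ne'
      have h3 := hp.ne'
      rw [div_div_div_eq]
      rw [div_eq_div_iff (by positivity) (by positivity)]
      ring
    rw [hr, Real.log_div hp.ne' hq.ne', Real.log_div hq.ne' hp.ne']
    field_simp
    ring

theorem jeffreys_divergence_lower_bound {α : Type*} [Fintype α] (P Q : α → ℝ)
    (hP : ∀ x, 0 ≤ P x) (hQ : ∀ x, 0 ≤ Q x)
    (hPsum : ∑ x, P x = 1) (hQsum : ∑ x, Q x = 1)
    (hac : ∀ x, P x = 0 ↔ Q x = 0)
    (ε : ℝ) (hε : ε = (1 / 2) * ∑ x, |P x - Q x|) (hε1 : ε < 1) :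
    ((∑ x, P x * Real.log (P x / Q x)) + (∑ x, Q x * Real.log (Q x / P x))) / 2
      ≥ ε * Real.log ((1 + ε) / (1 - ε)) := by
  classical
  set w : α → ℝ := fun x => (P x + Q x)/2 with hwdef
  set t : α → ℝ := fun x => |P x - Q x| / (P x + Q x) with htdef
  have hpos : ∀ x, P x + Q x ≠ 0 → (0 < P x ∧ 0 < Q x) := by
    intro x hx
    rcases (hP x).lt_or_eq with h | h
    · refine ⟨h, ?_⟩
      rcases (hQ x).lt_or_eq with h' | h'
      · exact h'
      · exact absurd ((hac x).2 h'.symm) h.ne'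
    · exact absurd (by rw [← h, (hac x).1 h.symm]; ring) hx
  have hw0 : ∀ x ∈ Finset.univ (α := α), 0 ≤ w x := by
    intro x _; have := hP x; have := hQ x
    simp only [hwdef]; linarith
  have hw1 : ∑ x, w x = 1 := by
    simp only [hwdef]
    rw [← Finset.sum_div, Finset.sum_add_distrib, hPsum, hQsum]
    norm_num
  have hmem : ∀ x ∈ Finset.univ (α := α), t x ∈ Set.Ico (0:ℝ) 1 := by
    intro x _
    constructor
    · apply div_nonneg (abs_nonneg _); linarith [hP x, hQ x]
    · by_cases h : P x + Q x = 0
      · simp only [htdef, h, div_zero]; norm_num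
      · obtain ⟨hp, hq⟩ := hpos x h
        have hs : (0:ℝ) < P x + Q x := by linarith
        simp only [htdef]
        rw [div_lt_one hs]
        rw [abs_lt]; constructor <;> linarith
  have jensen := phi_convex_s12.map_sum_le hw0 hw1 hmem
  have hsum_t : ∑ x, w x • t x = ε := by
    rw [hε, Finset.mul_sum]
    apply Finset.sum_congr rfl
    intro x _
    simp only [hwdef, htdef, smul_eq_mul]
    by_cases h : P x + Q x = 0
    · have hp0 : P x = 0 := by have := hP x; have := hQ x; linarith
      have hq0 : Q x = 0 := by have := hP x; have := hQ x; linarith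
      simp [hp0, hq0]
    · field_simp
  have hsum_phi : ∑ x, w x • (t x * Real.log ((1 + t x)/(1 - t x)))
      = ((∑ x, P x * Real.log (P x / Q x)) + (∑ x, Q x * Real.log (Q x / P x))) / 2 := by
    rw [← Finset.sum_add_distrib, Finset.sum_div]
    apply Finset.sum_congr rfl
    intro x _
    simp only [hwdef, htdef, smul_eq_mul]
    by_cases h : P x + Q x = 0
    · have hp0 : P x = 0 := by have := hP x; have := hQ x; linarith
      have hq0 : Q x = 0 := by have := hP x; have := hQ x; linarith
      simp [hp0, hq0]
    · obtain ⟨hp, hq⟩ := hpos x h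
      rw [eq_div_iff (by norm_num : (2:ℝ) ≠ 0)]
      have := pointwise_id (P x) (Q x) hp hq
      rw [this]
      ring
  rw [hsum_t, hsum_phi] at jensen
  simpa using jensen
end

section
/- For ε ∈ [0,1), the 2-element distributions P = ((1-ε)/2, (1+ε)/2) and Q = ((1+ε)/2, (1-ε)/2) satisfy J(P,Q) = ε·log((1+ε)/(1-ε)), so the lower bound on Jeffreys' divergence in terms of the total variation distance is attained. -/
theorem jeffreys_divergence_attained (ε : ℝ) (hε : ε ∈ Set.Ico (0 : ℝ) 1) :
    let P : Fin 2 → ℝ := ![(1 - ε) / 2, (1 + ε) / 2]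
    let Q : Fin 2 → ℝ := ![(1 + ε) / 2, (1 - ε) / 2]
    ((∑ x, P x * Real.log (P x / Q x)) + (∑ x, Q x * Real.log (Q x / P x))) / 2
      = ε * Real.log ((1 + ε) / (1 - ε)) := by
  obtain ⟨h0, h1⟩ := hε
  have ha : (1 : ℝ) - ε ≠ 0 := by linarith
  have hb : (1 : ℝ) + ε ≠ 0 := by linarith
  intro P Q
  simp only [P, Q, Fin.sum_univ_two, Matrix.cons_val_zero, Matrix.cons_val_one, Matrix.head_cons]
  have h2 : ((1 - ε) / 2) / ((1 + ε) / 2) = (1 - ε) / (1 + ε) := by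
    field_simp
  have h3 : ((1 + ε) / 2) / ((1 - ε) / 2) = (1 + ε) / (1 - ε) := by
    field_simp
  rw [h2, h3, Real.log_div ha hb, Real.log_div hb ha]
  ring
end

section
/- Let f: (0,∞) → ℝ be convex with f(1)=0, differentiable at 1, and satisfying f(u) = u·f(1/u) + 2f'(1)(u-1) for all u > 0 (symmetry condition). Then for any probability distributions P, Q on a finite set with full support and d_TV(P,Q) = ε < 1, the f-divergence satisfies D_f(P‖Q) ≥ (1-ε)·f((1+ε)/(1-ε)) - 2f'(1)·ε. -/
theorem symmetric_f_divergence_lower_bound {α : Type*} [Fintype α] (P Q : α → ℝ)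
    (hP : ∀ x, 0 < P x) (hQ : ∀ x, 0 < Q x)
    (hPsum : ∑ x, P x = 1) (hQsum : ∑ x, Q x = 1)
    (f : ℝ → ℝ) (a : ℝ)
    (hconv : ConvexOn ℝ (Set.Ioi 0) f) (hf1 : f 1 = 0)
    (hderiv : HasDerivAt f a 1)
    (hsym : ∀ u : ℝ, 0 < u → f u = u * f (1 / u) + 2 * a * (u - 1))
    (ε : ℝ) (hε : ε = (1 / 2) * ∑ x, |P x - Q x|) (hε1 : ε < 1) :
    ∑ x, Q x * f (P x / Q x) ≥ (1 - ε) * f ((1 + ε) / (1 - ε)) - 2 * a * ε := by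
  classical
  set g : ℝ → ℝ := fun u => f u - a * (u - 1) with hgdef
  have h1ε : (0:ℝ) < 1 - ε := by linarith
  have hgconv : ConvexOn ℝ (Set.Ioi 0) g := by
    have haff : ConcaveOn ℝ (Set.Ioi 0) (fun u : ℝ => a * (u - 1)) := by
      refine ⟨convex_Ioi 0, ?_⟩
      intro x _ y _ c d hc hd hcd
      have hd' : d = 1 - c := by linarith
      subst hd'
      simp only [smul_eq_mul]
      apply le_of_eq
      ring
    exact hconv.sub haff
  have hgsym : ∀ u : ℝ, 0 < u → g u = u * g (1 / u) := by
    intro u hu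
    have h1 := hsym u hu
    simp only [hgdef]
    rw [h1]
    field_simp
    ring
  have hε0 : 0 ≤ ε := by
    rw [hε]
    positivity
  have hsumfg : ∑ x, Q x * f (P x / Q x) = ∑ x, Q x * g (P x / Q x) := by
    have h1 : ∀ x, Q x * f (P x / Q x) = Q x * g (P x / Q x) + a * (P x - Q x) := by
      intro x
      have hq := (hQ x).ne'
      simp only [hgdef]
      field_simp
      ring
    simp_rw [h1, Finset.sum_add_distrib, ← Finset.mul_sum]
    have h2 : ∑ x, (P x - Q x) = 0 := by
      rw [Finset.sum_sub_distrib, hPsum, hQsum]; ring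
    rw [h2]; ring
  have hrhs : (1 - ε) * f ((1 + ε) / (1 - ε)) - 2 * a * ε
      = (1 - ε) * g ((1 + ε) / (1 - ε)) := by
    simp only [hgdef]
    field_simp
    ring
  rw [hsumfg, hrhs, ge_iff_le]
  rcases eq_or_lt_of_le hε0 with hε0' | hεpos
  · -- ε = 0 case
    have hε0'' : ε = 0 := hε0'.symm
    subst hε0''
    have hg1 : g 1 = 0 := by simp [hgdef, hf1]
    have hsum0 : ∑ x, Q x * g (P x / Q x) = 0 := by
      have hPQ : ∀ x, P x = Q x := by
        have hs0 : ∑ x, |P x - Q x| = 0 := by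
          rw [hε] at hε0'; linarith
        intro x
        have h1 := (Finset.sum_eq_zero_iff_of_nonneg
          (fun i _ => abs_nonneg (P i - Q i))).mp hs0 x (Finset.mem_univ x)
        have h2 := abs_eq_zero.mp h1
        linarith
      apply Finset.sum_eq_zero
      intro x _
      rw [hPQ x, div_self (hQ x).ne', hg1, mul_zero]
    rw [hsum0]
    norm_num [hg1]
  · -- main case ε > 0
    set A : Finset α := Finset.univ.filter (fun x => Q x ≤ P x) with hA
    set B : Finset α := Finset.univ.filter (fun x => ¬ Q x ≤ P x) with hB
    have hsplit : ∀ F : α → ℝ, ∑ x, F x = ∑ x ∈ A, F x + ∑ x ∈ B, F x :=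
      fun F => (Finset.sum_filter_add_sum_filter_not Finset.univ _ F).symm
    have habsA : ∑ x ∈ A, |P x - Q x| = ∑ x ∈ A, (P x - Q x) := by
      apply Finset.sum_congr rfl
      intro x hx
      rw [hA, Finset.mem_filter] at hx
      rw [abs_of_nonneg (by linarith [hx.2])]
    have habsB : ∑ x ∈ B, |P x - Q x| = ∑ x ∈ B, (Q x - P x) := by
      apply Finset.sum_congr rfl
      intro x hx
      rw [hB, Finset.mem_filter] at hx
      have : P x < Q x := not_le.mp hx.2
      rw [abs_of_neg (by linarith), neg_sub]
    have htot : ∑ x ∈ A, (P x - Q x) + ∑ x ∈ B, (P x - Q x) = 0 := by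
      rw [← hsplit, Finset.sum_sub_distrib, hPsum, hQsum]; ring
    have hBsub : ∑ x ∈ B, (Q x - P x) = - ∑ x ∈ B, (P x - Q x) := by
      rw [← Finset.sum_neg_distrib]
      apply Finset.sum_congr rfl
      intro x _; ring
    have hsA : ∑ x ∈ A, (P x - Q x) = ε := by
      have h2ε : ∑ x ∈ A, (P x - Q x) + ∑ x ∈ B, (Q x - P x) = 2 * ε := by
        rw [← habsA, ← habsB, ← hsplit]; rw [hε]; ring
      rw [hBsub] at h2ε
      linarith
    have hsB : ∑ x ∈ B, (Q x - P x) = ε := by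
      rw [hBsub]; linarith
    set q : ℝ := ∑ x ∈ A, Q x with hq
    set s : ℝ := ∑ x ∈ B, P x with hs
    have hpA : ∑ x ∈ A, P x = q + ε := by
      rw [Finset.sum_sub_distrib] at hsA
      rw [hq]; linarith
    have hQB : ∑ x ∈ B, Q x = s + ε := by
      rw [Finset.sum_sub_distrib] at hsB
      rw [hs]; linarith
    have hAne : A.Nonempty := by
      apply Finset.nonempty_of_sum_ne_zero (f := fun x => P x - Q x)
      rw [hsA]; exact hεpos.ne'
    have hBne : B.Nonempty := by
      apply Finset.nonempty_of_sum_ne_zero (f := fun x => Q x - P x)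
      rw [hsB]; exact hεpos.ne'
    have hqpos : 0 < q := Finset.sum_pos (fun x _ => hQ x) hAne
    have hspos : 0 < s := Finset.sum_pos (fun x _ => hP x) hBne
    have hqs : q + s = 1 - ε := by
      have := hsplit Q
      rw [hQsum, hQB] at this
      linarith
    -- Jensen on A
    have hJA : q * g ((q + ε) / q) ≤ ∑ x ∈ A, Q x * g (P x / Q x) := by
      have hw : ∀ x ∈ A, 0 ≤ Q x / q := fun x _ => div_nonneg (hQ x).le hqpos.le
      have hw1 : ∑ x ∈ A, Q x / q = 1 := by
        rw [← Finset.sum_div, ← hq, div_self hqpos.ne']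
      have hmem : ∀ x ∈ A, P x / Q x ∈ Set.Ioi (0:ℝ) := fun x _ => div_pos (hP x) (hQ x)
      have hj := hgconv.map_sum_le hw hw1 hmem
      have harg : ∑ x ∈ A, (Q x / q) • (P x / Q x) = (q + ε) / q := by
        simp only [smul_eq_mul]
        rw [Finset.sum_congr rfl (fun x _ => by
          have h1 := (hQ x).ne'
          have h2 := hqpos.ne'
          field_simp : ∀ x ∈ A, Q x / q * (P x / Q x) = P x / q)]
        rw [← Finset.sum_div, hpA]
      rw [harg] at hj
      simp only [smul_eq_mul] at hj
      have h2 : ∑ x ∈ A, Q x / q * g (P x / Q x) = (∑ x ∈ A, Q x * g (P x / Q x)) / q := by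
        rw [Finset.sum_div]
        apply Finset.sum_congr rfl
        intro x _; ring
      rw [h2, le_div_iff₀ hqpos] at hj
      linarith
    -- Jensen on B
    have hJB : (s + ε) * g (s / (s + ε)) ≤ ∑ x ∈ B, Q x * g (P x / Q x) := by
      have hsε : (0:ℝ) < s + ε := by linarith
      have hw : ∀ x ∈ B, 0 ≤ Q x / (s + ε) := fun x _ => div_nonneg (hQ x).le hsε.le
      have hw1 : ∑ x ∈ B, Q x / (s + ε) = 1 := by
        rw [← Finset.sum_div, hQB, div_self hsε.ne']
      have hmem : ∀ x ∈ B, P x / Q x ∈ Set.Ioi (0:ℝ) := fun x _ => div_pos (hP x) (hQ x)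
      have hj := hgconv.map_sum_le hw hw1 hmem
      have harg : ∑ x ∈ B, (Q x / (s + ε)) • (P x / Q x) = s / (s + ε) := by
        simp only [smul_eq_mul]
        rw [Finset.sum_congr rfl (fun x _ => by
          have h1 := (hQ x).ne'
          have h2 := hsε.ne'
          field_simp : ∀ x ∈ B, Q x / (s + ε) * (P x / Q x) = P x / (s + ε))]
        rw [← Finset.sum_div, ← hs]
      rw [harg] at hj
      simp only [smul_eq_mul] at hj
      have h2 : ∑ x ∈ B, Q x / (s + ε) * g (P x / Q x)
          = (∑ x ∈ B, Q x * g (P x / Q x)) / (s + ε) := by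
        rw [Finset.sum_div]
        apply Finset.sum_congr rfl
        intro x _; ring
      rw [h2, le_div_iff₀ hsε] at hj
      linarith
    -- symmetry rewrite on B term
    have hsymB : (s + ε) * g (s / (s + ε)) = s * g ((s + ε) / s) := by
      have hsε : (0:ℝ) < s + ε := by linarith
      have h1 := hgsym (s / (s + ε)) (div_pos hspos hsε)
      rw [one_div_div] at h1
      rw [h1]
      field_simp
    -- final convexity step
    have hfin : (1 - ε) * g ((1 + ε) / (1 - ε))
        ≤ q * g ((q + ε) / q) + s * g ((s + ε) / s) := by
      have hx : (q + ε) / q ∈ Set.Ioi (0:ℝ) := div_pos (by linarith) hqpos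
      have hy : (s + ε) / s ∈ Set.Ioi (0:ℝ) := div_pos (by linarith) hspos
      have hc : (0:ℝ) ≤ q / (1 - ε) := div_nonneg hqpos.le h1ε.le
      have hd : (0:ℝ) ≤ s / (1 - ε) := div_nonneg hspos.le h1ε.le
      have hcd : q / (1 - ε) + s / (1 - ε) = 1 := by
        rw [← add_div, hqs, div_self h1ε.ne']
      have hj := hgconv.2 hx hy hc hd hcd
      simp only [smul_eq_mul] at hj
      have harg : q / (1 - ε) * ((q + ε) / q) + s / (1 - ε) * ((s + ε) / s)
          = (1 + ε) / (1 - ε) := by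
        have e1 : q / (1 - ε) * ((q + ε) / q) = (q + ε) / (1 - ε) := by
          field_simp
        have e2 : s / (1 - ε) * ((s + ε) / s) = (s + ε) / (1 - ε) := by
          field_simp
        rw [e1, e2, ← add_div]
        congr 1
        linarith
      rw [harg] at hj
      have hj2 := mul_le_mul_of_nonneg_left hj h1ε.le
      have e3 : (1 - ε) * (q / (1 - ε) * g ((q + ε) / q) + s / (1 - ε) * g ((s + ε) / s))
          = q * g ((q + ε) / q) + s * g ((s + ε) / s) := by
        field_simp
      linarith
    calc (1 - ε) * g ((1 + ε) / (1 - ε))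
        ≤ q * g ((q + ε) / q) + s * g ((s + ε) / s) := hfin
      _ = q * g ((q + ε) / q) + (s + ε) * g (s / (s + ε)) := by rw [hsymB]
      _ ≤ ∑ x ∈ A, Q x * g (P x / Q x) + ∑ x ∈ B, Q x * g (P x / Q x) := by
          exact add_le_add hJA hJB
      _ = ∑ x, Q x * g (P x / Q x) := (hsplit _).symm
end

section
/- With the setup of the source coding bound, define δ(u) = l(u) + log_d P(u). Then D(Q‖P) = -log c - (log d / c)·Σ_u P(u)·δ(u)·d^{-δ(u)}, and consequently the Jeffreys divergence satisfies J(P,Q) = (1/2)[Δ·log d - (log d / c)·Σ_u P(u)·δ(u)·d^{-δ(u)}]. If moreover δ(u) ≥ 0 for all u (i.e., l(u) ≥ -log_d P(u)), then J(P,Q) ≤ (Δ·log d)/2. -/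
theorem source_coding_jeffreys_bound {U : Type*} [Fintype U] [Nonempty U]
    (P : U → ℝ) (hP : ∀ u, 0 < P u) (hPsum : ∑ u, P u = 1)
    (d : ℕ) (hd : 2 ≤ d) (l : U → ℕ)
    (c : ℝ) (hc : c = ∑ u, ((d : ℝ) ^ l u)⁻¹)
    (Q : U → ℝ) (hQ : ∀ u, Q u = ((d : ℝ) ^ l u)⁻¹ / c)
    (δ : U → ℝ) (hδ : ∀ u, δ u = l u + Real.log (P u) / Real.log d)
    (Δ : ℝ) (hΔ : Δ = (∑ u, P u * l u) + (∑ u, P u * Real.log (P u)) / Real.log d) :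
    (∑ u, Q u * Real.log (Q u / P u))
      = -Real.log c - (Real.log d / c) * ∑ u, P u * δ u * (d : ℝ) ^ (-δ u) ∧
    ((∑ u, P u * Real.log (P u / Q u)) + (∑ u, Q u * Real.log (Q u / P u))) / 2
      = (1 / 2) * (Δ * Real.log d
          - (Real.log d / c) * ∑ u, P u * δ u * (d : ℝ) ^ (-δ u)) ∧
    ((∀ u, 0 ≤ δ u) →
      ((∑ u, P u * Real.log (P u / Q u)) + (∑ u, Q u * Real.log (Q u / P u))) / 2
        ≤ Δ * Real.log d / 2) := by
  have hd1 : (1:ℝ) < (d:ℝ) := by exact_mod_cast lt_of_lt_of_le one_lt_two hd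
  have hdpos : (0:ℝ) < d := lt_trans one_pos hd1
  have hlogd : 0 < Real.log d := Real.log_pos hd1
  have hld : Real.log (d:ℝ) ≠ 0 := ne_of_gt hlogd
  have hpow : ∀ u : U, (0:ℝ) < (d:ℝ) ^ l u := fun u => pow_pos hdpos _
  have hcpos : 0 < c := by
    rw [hc]; exact Finset.sum_pos (fun u _ => inv_pos.mpr (hpow u)) Finset.univ_nonempty
  have hQpos : ∀ u, 0 < Q u := fun u => by rw [hQ]; positivity
  have hrpow : ∀ u, (d:ℝ) ^ (-δ u) = ((d:ℝ) ^ l u)⁻¹ / P u := by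
    intro u
    rw [Real.rpow_def_of_pos hdpos, hδ]
    have h1 : Real.log ↑d * -(↑(l u) + Real.log (P u) / Real.log ↑d)
        = (-(↑(l u) * Real.log ↑d)) + (- Real.log (P u)) := by field_simp; ring
    rw [h1, Real.exp_add, Real.exp_neg, Real.exp_neg, Real.exp_log (hP u),
        ← Real.log_pow, Real.exp_log (hpow u), div_eq_mul_inv]
  have hlogQP : ∀ u, Real.log (Q u / P u) = -(δ u * Real.log d) - Real.log c := by
    intro u
    rw [Real.log_div (ne_of_gt (hQpos u)) (ne_of_gt (hP u)), hQ,
        Real.log_div (by positivity) (ne_of_gt hcpos), Real.log_inv, Real.log_pow, hδ]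
    field_simp; ring
  have hlogPQ : ∀ u, Real.log (P u / Q u) = δ u * Real.log d + Real.log c := by
    intro u
    rw [Real.log_div (ne_of_gt (hP u)) (ne_of_gt (hQpos u)), hQ,
        Real.log_div (by positivity) (ne_of_gt hcpos), Real.log_inv, Real.log_pow, hδ]
    field_simp; ring
  have hΔ' : Δ = ∑ u, P u * δ u := by
    rw [hΔ, Finset.sum_div, ← Finset.sum_add_distrib]
    exact Finset.sum_congr rfl fun u _ => by rw [hδ]; ring
  have hS : (∑ u, P u * δ u * (d:ℝ)^(-δ u)) = ∑ u, δ u * ((d:ℝ)^(l u))⁻¹ := by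
    refine Finset.sum_congr rfl fun u _ => ?_
    rw [hrpow u]
    have h2 : P u * δ u * (((d:ℝ) ^ l u)⁻¹ / P u)
        = δ u * ((d:ℝ) ^ l u)⁻¹ * (P u / P u) := by ring
    rw [h2, div_self (hP u).ne', mul_one]
  have hQsum : ∑ u, Q u = 1 := by
    have : ∑ u, Q u = (∑ u, ((d : ℝ) ^ l u)⁻¹) / c := by
      rw [Finset.sum_div]; exact Finset.sum_congr rfl fun u _ => hQ u
    rw [this, ← hc, div_self (ne_of_gt hcpos)]
  have hQδ : ∑ u, Q u * δ u = (∑ u, P u * δ u * (d:ℝ)^(-δ u)) / c := by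
    rw [hS, Finset.sum_div]
    refine Finset.sum_congr rfl fun u _ => ?_
    rw [hQ]; ring
  have eqQ : ∑ u, Q u * Real.log (Q u / P u)
      = -Real.log c - (Real.log d / c) * ∑ u, P u * δ u * (d:ℝ)^(-δ u) := by
    have h : ∀ u ∈ Finset.univ, Q u * Real.log (Q u / P u)
        = -Real.log (d:ℝ) * (Q u * δ u) - Real.log c * Q u := fun u _ => by
      rw [hlogQP u]; ring
    rw [Finset.sum_congr rfl h, Finset.sum_sub_distrib, ← Finset.mul_sum, ← Finset.mul_sum,
        hQsum, hQδ]
    field_simp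
    ring
  have eqP : ∑ u, P u * Real.log (P u / Q u) = Δ * Real.log d + Real.log c := by
    have h : ∀ u ∈ Finset.univ, P u * Real.log (P u / Q u)
        = Real.log (d:ℝ) * (P u * δ u) + Real.log c * P u := fun u _ => by
      rw [hlogPQ u]; ring
    rw [Finset.sum_congr rfl h, Finset.sum_add_distrib, ← Finset.mul_sum, ← Finset.mul_sum,
        hPsum, ← hΔ']
    ring
  refine ⟨eqQ, ?_, ?_⟩
  · rw [eqP, eqQ]; ring
  · intro h
    rw [eqP, eqQ]
    have hS0 : 0 ≤ ∑ u, P u * δ u * (d:ℝ)^(-δ u) :=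
      Finset.sum_nonneg fun u _ =>
        mul_nonneg (mul_nonneg (hP u).le (h u)) (Real.rpow_pos_of_pos hdpos _).le
    have : 0 ≤ (Real.log d / c) * ∑ u, P u * δ u * (d:ℝ)^(-δ u) :=
      mul_nonneg (div_nonneg hlogd.le hcpos.le) hS0
    linarith
end
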